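/- Under the same setup, for any bounded measurable function H of W with W ⟂ (D,Z) | U, Z ⟂ U, E[D|Z=1,U] − E[D|Z=0,U] = δ ≠ 0 constant, and 0 < P(Z=1) < 1, one has E[ H(W) · (1−D) · (2Z−1) / (f(Z) δ) ] = −E[H(W)], where f(z) = P(Z=z). -/

import Mathlib

open MeasureTheory ProbabilityTheory Real Filter
open scoped NNReal ENNReal

private lemma integrable_of_bdd {Ω : Type*} [MeasurableSpace Ω] {μ : Measure Ω}
    [IsFiniteMeasure μ] {f : Ω → ℝ} {C : ℝ} (hf : AEStronglyMeasurable f μ)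
    (h : ∀ᵐ ω ∂μ, |f ω| ≤ C) : Integrable f μ :=
  ⟨hf, HasFiniteIntegral.of_bounded (by simpa [Real.norm_eq_abs] using h)⟩

/-- The conditional-independence factorization: for `B` in the σ-algebra of `V`,
`∫_B H(W) dμ = ∫ H(W) · E[1_B | m] dμ`. -/
private lemma star_lemma {Ω : Type*} {m : MeasurableSpace Ω} {mΩ : MeasurableSpace Ω}
    [StandardBorelSpace Ω]
    (μ : Measure Ω) [IsProbabilityMeasure μ] (hm : m ≤ mΩ)
    {W : Ω → ℝ} {V : Ω → ℝ × ℝ} (hW : Measurable W) (hV : Measurable V)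
    (hci : CondIndepFun m hm W V μ)
    {H : ℝ → ℝ} (hH : Measurable H) {C : ℝ} (hHb : ∀ x, |H x| ≤ C)
    {t : Set (ℝ × ℝ)} (ht : MeasurableSet t) {B : Set Ω} (hBt : B = V ⁻¹' t) :
    ∫ ω in B, H (W ω) ∂μ
      = ∫ ω, H (W ω) * (μ[B.indicator (fun _ => (1:ℝ)) | m]) ω ∂μ := by
  have hB : MeasurableSet B := hBt ▸ hV ht
  set Y : Ω → ℝ := μ[B.indicator (fun _ => (1:ℝ)) | m] with hYdef
  have hYsm : StronglyMeasurable[m] Y := stronglyMeasurable_condExp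
  have hYm : Measurable Y := (hYsm.mono hm).measurable
  have hY1 : ∀ᵐ ω ∂μ, |Y ω| ≤ 1 := by
    have : ∀ᵐ ω ∂μ, |B.indicator (fun _ => (1:ℝ)) ω| ≤ ((1 : ℝ≥0) : ℝ) := by
      refine Eventually.of_forall fun ω => ?_
      by_cases hω : ω ∈ B <;> simp [Set.indicator_apply, hω]
    simpa using ae_bdd_condExp_of_ae_bdd (R := 1) this
  have hY0 : 0 ≤ᵐ[μ] Y :=
    condExp_nonneg (Eventually.of_forall fun ω => Set.indicator_nonneg (fun _ _ => zero_le_one) ω)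
  -- step a: key identity per Borel set s
  have key : ∀ s : Set ℝ, MeasurableSet s →
      (μ (W ⁻¹' s ∩ B)).toReal
        = ∫ ω, (W ⁻¹' s).indicator (fun _ => (1:ℝ)) ω * Y ω ∂μ := by
    intro s hs
    have hfac := (condIndepFun_iff_condExp_inter_preimage_eq_mul (μ := μ) (hm' := hm)
      hW hV).mp hci s t hs ht
    rw [← hBt] at hfac
    have hιint : Integrable ((W ⁻¹' s).indicator (fun _ => (1:ℝ))) μ :=
      integrable_of_bdd (C := 1) (((measurable_const.indicator (hW hs))).aestronglyMeasurable)
        (Eventually.of_forall fun ω => by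
          by_cases hω : ω ∈ W ⁻¹' s <;> simp [Set.indicator_apply, hω])
    have pull : μ[fun ω => Y ω * (W ⁻¹' s).indicator (fun _ => (1:ℝ)) ω | m]
        =ᵐ[μ] fun ω => Y ω * (μ[(W ⁻¹' s).indicator (fun _ => (1:ℝ)) | m]) ω :=
      condExp_stronglyMeasurable_mul_of_bound hm hYsm hιint 1
        (by simpa [Real.norm_eq_abs] using hY1)
    calc (μ (W ⁻¹' s ∩ B)).toReal
        = ∫ ω, (W ⁻¹' s ∩ B).indicator (fun _ => (1:ℝ)) ω ∂μ :=
          (integral_indicator_one ((hW hs).inter hB)).symm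
      _ = ∫ ω, (μ[(W ⁻¹' s ∩ B).indicator (fun _ => (1:ℝ)) | m]) ω ∂μ :=
          (integral_condExp hm).symm
      _ = ∫ ω, (μ[(W ⁻¹' s).indicator (fun _ => (1:ℝ)) | m]) ω * Y ω ∂μ :=
          integral_congr_ae hfac
      _ = ∫ ω, Y ω * (μ[(W ⁻¹' s).indicator (fun _ => (1:ℝ)) | m]) ω ∂μ := by
          simp_rw [mul_comm]
      _ = ∫ ω, (μ[fun ω => Y ω * (W ⁻¹' s).indicator (fun _ => (1:ℝ)) ω | m]) ω ∂μ :=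
          (integral_congr_ae pull).symm
      _ = ∫ ω, Y ω * (W ⁻¹' s).indicator (fun _ => (1:ℝ)) ω ∂μ := integral_condExp hm
      _ = ∫ ω, (W ⁻¹' s).indicator (fun _ => (1:ℝ)) ω * Y ω ∂μ := by simp_rw [mul_comm]
  -- step b/c: the two pushforward measures agree
  set Y' : Ω → ℝ := fun ω => max (Y ω) 0 with hY'def
  have hY'm : Measurable Y' := hYm.max measurable_const
  have hY'ae : Y' =ᵐ[μ] Y := by filter_upwards [hY0] with ω h using max_eq_left h
  have hY'int : Integrable Y' μ := by
    refine integrable_of_bdd (C := 1) hY'm.aestronglyMeasurable ?_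
    filter_upwards [hY1, hY0] with ω h1 h0
    have h0' : (0:ℝ) ≤ Y ω := h0
    calc |Y' ω| = |Y ω| := by rw [hY'def]; simp [max_eq_left h0']
      _ ≤ 1 := h1
  have hmeq : (μ.restrict B).map W
      = (μ.withDensity (fun ω => ENNReal.ofReal (Y' ω))).map W := by
    refine Measure.ext fun s hs => ?_
    rw [Measure.map_apply hW hs, Measure.map_apply hW hs, Measure.restrict_apply (hW hs),
      withDensity_apply _ (hW hs)]
    have h1 : ∫⁻ ω in W ⁻¹' s, ENNReal.ofReal (Y' ω) ∂μ
        = ENNReal.ofReal (∫ ω in W ⁻¹' s, Y' ω ∂μ) :=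
      (ofReal_integral_eq_lintegral_ofReal hY'int.integrableOn
        (ae_restrict_of_ae (Eventually.of_forall fun ω => le_max_right _ _))).symm
    have h2 : ∫ ω in W ⁻¹' s, Y' ω ∂μ = (μ (W ⁻¹' s ∩ B)).toReal := by
      rw [← integral_indicator (hW hs), key s hs]
      refine integral_congr_ae ?_
      filter_upwards [hY'ae] with ω h
      by_cases hω : ω ∈ W ⁻¹' s <;> simp [Set.indicator_apply, hω, h]
    rw [h1, h2, ENNReal.ofReal_toReal (measure_ne_top _ _)]
  -- step d: conclude
  calc ∫ ω in B, H (W ω) ∂μ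
      = ∫ y, H y ∂((μ.restrict B).map W) :=
        (integral_map hW.aemeasurable hH.aestronglyMeasurable).symm
    _ = ∫ y, H y ∂((μ.withDensity (fun ω => ENNReal.ofReal (Y' ω))).map W) := by rw [hmeq]
    _ = ∫ ω, H (W ω) ∂(μ.withDensity (fun ω => ENNReal.ofReal (Y' ω))) :=
        integral_map hW.aemeasurable hH.aestronglyMeasurable
    _ = ∫ ω, (Y' ω).toNNReal • H (W ω) ∂μ := by
        have : (fun ω => ENNReal.ofReal (Y' ω)) = fun ω => ((Y' ω).toNNReal : ℝ≥0∞) := rfl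
        rw [this]
        exact integral_withDensity_eq_integral_smul hY'm.real_toNNReal _
    _ = ∫ ω, H (W ω) * Y ω ∂μ := by
        refine integral_congr_ae ?_
        filter_upwards [hY0] with ω h0
        have h0' : (0:ℝ) ≤ Y ω := h0
        have : Y' ω = Y ω := max_eq_left h0'
        simp [NNReal.smul_def, Real.coe_toNNReal', this, max_eq_left h0', mul_comm]

private theorem main_aux {Ω : Type*} {m : MeasurableSpace Ω} {mΩ : MeasurableSpace Ω}
    [StandardBorelSpace Ω] (μ : Measure Ω) [IsProbabilityMeasure μ] (hm : m ≤ mΩ)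
    (Z D W : Ω → ℝ) (H : ℝ → ℝ) (δ : ℝ)
    (hZ : Measurable Z) (hD : Measurable D) (hW : Measurable W)
    (hHmeas : Measurable H) {C : ℝ} (hC : ∀ x, |H x| ≤ C)
    (hZ01 : ∀ ω, Z ω = 0 ∨ Z ω = 1) (hD01 : ∀ ω, D ω = 0 ∨ D ω = 1)
    (hZpos : 0 < μ {ω | Z ω = 1}) (hZlt : μ {ω | Z ω = 1} < 1)
    (hindep : Indep (MeasurableSpace.comap Z inferInstance) m μ)
    (hci : CondIndepFun m hm W (fun ω => (D ω, Z ω)) μ)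
    (hδ : δ ≠ 0)
    (hdiff : ∀ᵐ ω ∂μ,
      MeasureTheory.condExp m (ProbabilityTheory.cond μ {ω' | Z ω' = 1}) D ω
      - MeasureTheory.condExp m (ProbabilityTheory.cond μ {ω' | Z ω' = 0}) D ω = δ) :
    ∫ ω, H (W ω) * (1 - D ω) * (2 * Z ω - 1) /
        ((μ {ω' | Z ω' = Z ω}).toReal * δ) ∂μ
      = - ∫ ω, H (W ω) ∂μ := by
  have hC0 : 0 ≤ C := le_trans (abs_nonneg _) (hC 0)
  -- the sets
  have hA : MeasurableSet {ω | Z ω = 1} := hZ (measurableSet_singleton 1)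
  have hA0 : MeasurableSet {ω | Z ω = 0} := hZ (measurableSet_singleton 0)
  have hAc : {ω | Z ω = 0} = {ω | Z ω = 1}ᶜ := by
    ext ω
    rcases hZ01 ω with h | h <;> simp [h]
  have hμA : μ {ω | Z ω = 1} ≠ 0 := hZpos.ne'
  have hμA0 : μ {ω | Z ω = 0} ≠ 0 := by
    rw [hAc, prob_compl_eq_one_sub hA]
    rw [Ne, tsub_eq_zero_iff_le, not_le]
    exact hZlt
  have hp : 0 < (μ {ω | Z ω = 1}).toReal := ENNReal.toReal_pos hμA (measure_ne_top μ _)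
  have hq : 0 < (μ {ω | Z ω = 0}).toReal := ENNReal.toReal_pos hμA0 (measure_ne_top μ _)
  -- the functions
  set h : Ω → ℝ := fun ω => H (W ω) with hh_def
  have hhm : Measurable h := hHmeas.comp hW
  have hint : Integrable h μ :=
    integrable_of_bdd hhm.aestronglyMeasurable (Eventually.of_forall fun ω => hC (W ω))
  set k : Ω → ℝ := MeasureTheory.condExp m μ h with hk_def
  have hksm : StronglyMeasurable[m] k := stronglyMeasurable_condExp
  have hkm : Measurable k := (hksm.mono hm).measurable
  have hkC : ∀ᵐ ω ∂μ, |k ω| ≤ C := by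
    have := ae_bdd_condExp_of_ae_bdd (m := m) (μ := μ) (R := C.toNNReal) (f := h)
      (Eventually.of_forall fun ω => by
        rw [Real.coe_toNNReal C hC0]; exact hC (W ω))
    simpa [Real.coe_toNNReal C hC0] using this
  -- V and preimage descriptions
  have hV : Measurable (fun ω => (D ω, Z ω)) := hD.prodMk hZ
  have hAeq : {ω | Z ω = 1} = (fun ω => (D ω, Z ω)) ⁻¹' (Set.univ ×ˢ ({1} : Set ℝ)) := by
    ext ω; simp
  have hA0eq : {ω | Z ω = 0} = (fun ω => (D ω, Z ω)) ⁻¹' (Set.univ ×ˢ ({0} : Set ℝ)) := by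
    ext ω; simp
  have hB1eq : {ω | D ω = 1} ∩ {ω | Z ω = 1}
      = (fun ω => (D ω, Z ω)) ⁻¹' (({1} : Set ℝ) ×ˢ ({1} : Set ℝ)) := by
    ext ω
    simp only [Set.mem_inter_iff, Set.mem_setOf_eq, Set.mem_preimage, Set.mem_prod,
      Set.mem_singleton_iff]
  have hB0eq : {ω | D ω = 1} ∩ {ω | Z ω = 0}
      = (fun ω => (D ω, Z ω)) ⁻¹' (({1} : Set ℝ) ×ˢ ({0} : Set ℝ)) := by
    ext ω
    simp only [Set.mem_inter_iff, Set.mem_setOf_eq, Set.mem_preimage, Set.mem_prod,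
      Set.mem_singleton_iff]
  -- F2 : condExp of indicator of Z-measurable sets is constant
  have F2 : ∀ c : ℝ, MeasureTheory.condExp m μ ({ω | Z ω = c}.indicator (fun _ => (1:ℝ)))
      =ᵐ[μ] fun _ => (μ {ω | Z ω = c}).toReal := by
    intro c
    have hsm : StronglyMeasurable[MeasurableSpace.comap Z inferInstance]
        ({ω | Z ω = c}.indicator (fun _ => (1:ℝ))) :=
      stronglyMeasurable_const.indicator ⟨{c}, measurableSet_singleton c, rfl⟩
    have := condExp_indep_eq hZ.comap_le hm hsm hindep
    refine this.trans ?_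
    have : ∫ ω, {ω | Z ω = c}.indicator (fun _ => (1:ℝ)) ω ∂μ = (μ {ω | Z ω = c}).toReal :=
      integral_indicator_one (hZ (measurableSet_singleton c))
    rw [this]
  -- F3 : the key computation for the sets {D = 1} ∩ S
  have F3 : ∀ S : Set Ω, MeasurableSet S → μ S ≠ 0 →
      (MeasureTheory.condExp m μ (S.indicator (fun _ => (1:ℝ)))
        =ᵐ[μ] fun _ => (μ S).toReal) →
      ∀ t : Set (ℝ × ℝ), MeasurableSet t →
      ({ω | D ω = 1} ∩ S = (fun ω => (D ω, Z ω)) ⁻¹' t) →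
      Integrable (fun ω => k ω * MeasureTheory.condExp m (μ[|S]) D ω) μ ∧
      ∫ ω in {ω | D ω = 1} ∩ S, h ω ∂μ
        = (μ S).toReal * ∫ ω, k ω * MeasureTheory.condExp m (μ[|S]) D ω ∂μ := by
    intro S hS hSne hYS t ht hBeq
    haveI : IsProbabilityMeasure (μ[|S]) := cond_isProbabilityMeasure hSne
    set ν : Measure Ω := μ[|S] with hν_def
    set g : Ω → ℝ := MeasureTheory.condExp m ν D with hg_def
    have hgsm : StronglyMeasurable[m] g := stronglyMeasurable_condExp
    have hgm : Measurable g := (hgsm.mono hm).measurable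
    set B : Set Ω := {ω | D ω = 1} ∩ S with hB_def
    have hB : MeasurableSet B := (hD (measurableSet_singleton 1)).inter hS
    set YB : Ω → ℝ := MeasureTheory.condExp m μ (B.indicator (fun _ => (1:ℝ))) with hYB_def
    have hYBsm : StronglyMeasurable[m] YB := stronglyMeasurable_condExp
    have hYB1 : ∀ᵐ ω ∂μ, |YB ω| ≤ 1 := by
      have := ae_bdd_condExp_of_ae_bdd (m := m) (μ := μ) (R := 1)
        (f := B.indicator (fun _ => (1:ℝ)))
        (Eventually.of_forall fun ω => by
          by_cases hω : ω ∈ B <;> simp [Set.indicator_apply, hω])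
      simpa using this
    have hg1ν : ∀ᵐ ω ∂ν, |g ω| ≤ 1 := by
      have := ae_bdd_condExp_of_ae_bdd (m := m) (μ := ν) (R := 1) (f := D)
        (Eventually.of_forall fun ω => by rcases hD01 ω with hd | hd <;> simp [hd])
      simpa using this
    have hgS : ∀ᵐ ω ∂μ, ω ∈ S → |g ω| ≤ 1 := by
      have h1 : ∀ᵐ ω ∂(μ.restrict S), |g ω| ≤ 1 := by
        have hcond : ν = (μ S)⁻¹ • μ.restrict S := rfl
        rw [hcond] at hg1ν
        exact (Measure.ae_ennreal_smul_measure_iff (ENNReal.inv_ne_zero.2 (measure_ne_top μ S))).mp hg1ν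
      exact (ae_restrict_iff' hS).mp h1
    have hkν : ∀ᵐ ω ∂ν, |k ω| ≤ C :=
      Eventually.filter_mono cond_absolutelyContinuous.ae_le hkC
    have hDν : Integrable D ν :=
      integrable_of_bdd (C := 1) hD.aestronglyMeasurable
        (Eventually.of_forall fun ω => by rcases hD01 ω with hd | hd <;> simp [hd])
    have hindB : Integrable (B.indicator (fun _ => (1:ℝ))) μ :=
      integrable_of_bdd (C := 1) (measurable_const.indicator hB).aestronglyMeasurable
        (Eventually.of_forall fun ω => by by_cases hω : ω ∈ B <;> simp [Set.indicator_apply, hω])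
    have hc0 : (μ S).toReal ≠ 0 := ENNReal.toReal_ne_zero.mpr ⟨hSne, measure_ne_top μ S⟩
    -- the conditional measure integral formula
    have cond_int : ∀ f : Ω → ℝ, ∫ ω, f ω ∂ν = (μ S).toReal⁻¹ * ∫ ω in S, f ω ∂μ := by
      intro f
      rw [hν_def, ProbabilityTheory.cond, integral_smul_measure, ENNReal.toReal_inv, smul_eq_mul]
    -- e1 : ∫ h·YB = ∫ YB·k
    have e1 : ∫ ω, h ω * YB ω ∂μ = ∫ ω, YB ω * k ω ∂μ := by
      have pull1 : MeasureTheory.condExp m μ (fun ω => YB ω * h ω)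
          =ᵐ[μ] fun ω => YB ω * k ω :=
        condExp_stronglyMeasurable_mul_of_bound hm hYBsm hint 1
          (by simpa [Real.norm_eq_abs] using hYB1)
      calc ∫ ω, h ω * YB ω ∂μ = ∫ ω, YB ω * h ω ∂μ := by simp_rw [mul_comm]
        _ = ∫ ω, MeasureTheory.condExp m μ (fun ω => YB ω * h ω) ω ∂μ :=
            (integral_condExp hm).symm
        _ = ∫ ω, YB ω * k ω ∂μ := integral_congr_ae pull1
    -- e2 : ∫ YB·k = ∫_B k
    have e2 : ∫ ω, YB ω * k ω ∂μ = ∫ ω in B, k ω ∂μ := by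
      have pull2 : MeasureTheory.condExp m μ (fun ω => k ω * B.indicator (fun _ => (1:ℝ)) ω)
          =ᵐ[μ] fun ω => k ω * YB ω :=
        condExp_stronglyMeasurable_mul_of_bound hm hksm hindB C
          (by simpa [Real.norm_eq_abs] using hkC)
      have hind_eq : ∀ ω, B.indicator k ω = k ω * B.indicator (fun _ => (1:ℝ)) ω := by
        intro ω; by_cases hω : ω ∈ B <;> simp [Set.indicator_apply, hω]
      calc ∫ ω, YB ω * k ω ∂μ = ∫ ω, k ω * YB ω ∂μ := by simp_rw [mul_comm]
        _ = ∫ ω, MeasureTheory.condExp m μ (fun ω => k ω * B.indicator (fun _ => (1:ℝ)) ω) ω ∂μ :=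
            (integral_congr_ae pull2).symm
        _ = ∫ ω, k ω * B.indicator (fun _ => (1:ℝ)) ω ∂μ := integral_condExp hm
        _ = ∫ ω, B.indicator k ω ∂μ := by simp_rw [hind_eq]
        _ = ∫ ω in B, k ω ∂μ := integral_indicator hB
    -- e3 : ∫_B k = c * ∫ k·D dν
    have e3 : ∫ ω in B, k ω ∂μ = (μ S).toReal * ∫ ω, k ω * D ω ∂ν := by
      have hptw : ∀ ω, S.indicator (fun ω => k ω * D ω) ω = B.indicator k ω := by
        intro ω
        by_cases hω : ω ∈ S
        · rcases hD01 ω with hd | hd <;>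
            simp [Set.indicator_apply, hω, hB_def, hd, Set.mem_inter_iff]
        · have : ω ∉ B := fun hB' => hω hB'.2
          simp [Set.indicator_apply, hω, this]
      rw [cond_int (fun ω => k ω * D ω), ← mul_assoc, mul_inv_cancel₀ hc0, one_mul]
      rw [← integral_indicator hS, ← integral_indicator hB]
      simp_rw [hptw]
    -- e4 : ∫ k·D dν = ∫ k·g dν
    have e4 : ∫ ω, k ω * D ω ∂ν = ∫ ω, k ω * g ω ∂ν := by
      haveI : SigmaFinite (ν.trim hm) := by infer_instance
      have pull3 : MeasureTheory.condExp m ν (fun ω => k ω * D ω)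
          =ᵐ[ν] fun ω => k ω * g ω :=
        condExp_stronglyMeasurable_mul_of_bound hm hksm hDν C
          (by simpa [Real.norm_eq_abs] using hkν)
      calc ∫ ω, k ω * D ω ∂ν
          = ∫ ω, MeasureTheory.condExp m ν (fun ω => k ω * D ω) ω ∂ν :=
            (integral_condExp hm).symm
        _ = ∫ ω, k ω * g ω ∂ν := integral_congr_ae pull3
    -- e5 : ∫ k·g dν = ∫ k·g dμ, and integrability
    have hindS : Integrable (S.indicator (fun _ => (1:ℝ))) μ :=
      integrable_of_bdd (C := 1) (measurable_const.indicator hS).aestronglyMeasurable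
        (Eventually.of_forall fun ω => by by_cases hω : ω ∈ S <;> simp [Set.indicator_apply, hω])
    have hbdd_kgS : ∀ᵐ ω ∂μ, |(k ω * g ω) * S.indicator (fun _ => (1:ℝ)) ω| ≤ C := by
      filter_upwards [hkC, hgS] with ω h1 h2
      by_cases hω : ω ∈ S
      · rw [abs_mul, abs_mul]
        calc |k ω| * |g ω| * |S.indicator (fun _ => (1:ℝ)) ω|
            ≤ C * 1 * 1 := by
              refine mul_le_mul (mul_le_mul h1 (h2 hω) (abs_nonneg _) hC0) ?_
                (abs_nonneg _) (by positivity)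
              simp [Set.indicator_of_mem hω]
        _ = C := by ring
      · simp [Set.indicator_of_notMem hω, hC0]
    have hint_kgS : Integrable (fun ω => (k ω * g ω) * S.indicator (fun _ => (1:ℝ)) ω) μ :=
      integrable_of_bdd ((hkm.mul hgm).mul
        (measurable_const.indicator hS)).aestronglyMeasurable hbdd_kgS
    have pull4 : MeasureTheory.condExp m μ
          ((fun ω => k ω * g ω) * S.indicator (fun _ => (1:ℝ)))
        =ᵐ[μ] fun ω => (k ω * g ω) * (μ S).toReal := by
      have := condExp_mul_of_stronglyMeasurable_left (μ := μ) (hksm.mul hgsm) hint_kgS hindS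
      refine this.trans ?_
      filter_upwards [hYS] with ω hω
      simp only [Pi.mul_apply, hω]
    have hkgint : Integrable (fun ω => k ω * g ω) μ := by
      have h1 : Integrable (fun ω => (k ω * g ω) * (μ S).toReal) μ :=
        integrable_condExp.congr pull4
      have h2 := h1.const_mul ((μ S).toReal)⁻¹
      refine h2.congr (Eventually.of_forall fun ω => ?_)
      field_simp
    have e5 : ∫ ω, k ω * g ω ∂ν = ∫ ω, k ω * g ω ∂μ := by
      have step : ∫ ω in S, k ω * g ω ∂μ = (μ S).toReal * ∫ ω, k ω * g ω ∂μ := by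
        calc ∫ ω in S, k ω * g ω ∂μ
            = ∫ ω, S.indicator (fun ω => k ω * g ω) ω ∂μ := (integral_indicator hS).symm
          _ = ∫ ω, ((fun ω => k ω * g ω) * S.indicator (fun _ => (1:ℝ))) ω ∂μ := by
              refine integral_congr_ae (Eventually.of_forall fun ω => ?_)
              by_cases hω : ω ∈ S <;> simp [Set.indicator_apply, hω]
          _ = ∫ ω, MeasureTheory.condExp m μ
                ((fun ω => k ω * g ω) * S.indicator (fun _ => (1:ℝ))) ω ∂μ :=
              (integral_condExp hm).symm
          _ = ∫ ω, (k ω * g ω) * (μ S).toReal ∂μ := integral_congr_ae pull4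
          _ = (μ S).toReal * ∫ ω, k ω * g ω ∂μ := by
              rw [integral_mul_const]; ring
      rw [cond_int (fun ω => k ω * g ω), step, ← mul_assoc, inv_mul_cancel₀ hc0, one_mul]
    -- combine
    have hstar := star_lemma μ hm hW hV hci hHmeas hC ht hBeq
    refine ⟨hkgint, ?_⟩
    calc ∫ ω in B, h ω ∂μ
        = ∫ ω, h ω * YB ω ∂μ := hstar
      _ = (μ S).toReal * ∫ ω, k ω * g ω ∂μ := by rw [e1, e2, e3, e4, e5]
  -- integrals over A and A0
  have hIA : ∫ ω in {ω | Z ω = 1}, h ω ∂μ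
      = (μ {ω | Z ω = 1}).toReal * ∫ ω, h ω ∂μ := by
    have hstar := star_lemma μ hm hW hV hci hHmeas hC
      (MeasurableSet.univ.prod (measurableSet_singleton (1:ℝ))) hAeq
    rw [hstar]
    calc ∫ ω, h ω * MeasureTheory.condExp m μ
          ({ω | Z ω = 1}.indicator (fun _ => (1:ℝ))) ω ∂μ
        = ∫ ω, h ω * (μ {ω | Z ω = 1}).toReal ∂μ := by
          refine integral_congr_ae ?_
          filter_upwards [F2 1] with ω hω
          rw [hω]
      _ = (μ {ω | Z ω = 1}).toReal * ∫ ω, h ω ∂μ := by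
          rw [integral_mul_const]; ring
  have hIA0 : ∫ ω in {ω | Z ω = 0}, h ω ∂μ
      = (μ {ω | Z ω = 0}).toReal * ∫ ω, h ω ∂μ := by
    have hstar := star_lemma μ hm hW hV hci hHmeas hC
      (MeasurableSet.univ.prod (measurableSet_singleton (0:ℝ))) hA0eq
    rw [hstar]
    calc ∫ ω, h ω * MeasureTheory.condExp m μ
          ({ω | Z ω = 0}.indicator (fun _ => (1:ℝ))) ω ∂μ
        = ∫ ω, h ω * (μ {ω | Z ω = 0}).toReal ∂μ := by
          refine integral_congr_ae ?_
          filter_upwards [F2 0] with ω hω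
          rw [hω]
      _ = (μ {ω | Z ω = 0}).toReal * ∫ ω, h ω ∂μ := by
          rw [integral_mul_const]; ring
  -- F3 applications
  obtain ⟨hint1, hI1⟩ := F3 {ω | Z ω = 1} hA hμA (F2 1) _
    ((measurableSet_singleton (1:ℝ)).prod (measurableSet_singleton (1:ℝ))) hB1eq
  obtain ⟨hint0, hI0⟩ := F3 {ω | Z ω = 0} hA0 hμA0 (F2 0) _
    ((measurableSet_singleton (1:ℝ)).prod (measurableSet_singleton (0:ℝ))) hB0eq
  -- F4 : combine with hdiff
  have F4 : ∫ ω, k ω * MeasureTheory.condExp m (μ[|{ω | Z ω = 1}]) D ω ∂μ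
      - ∫ ω, k ω * MeasureTheory.condExp m (μ[|{ω | Z ω = 0}]) D ω ∂μ
      = δ * ∫ ω, h ω ∂μ := by
    rw [← integral_sub hint1 hint0]
    have hae : (fun ω => k ω * MeasureTheory.condExp m (μ[|{ω | Z ω = 1}]) D ω
        - k ω * MeasureTheory.condExp m (μ[|{ω | Z ω = 0}]) D ω)
        =ᵐ[μ] fun ω => k ω * δ := by
      filter_upwards [hdiff] with ω hω
      rw [← mul_sub, hω]
    rw [integral_congr_ae hae, integral_mul_const, hk_def, integral_condExp hm, mul_comm]
  -- pointwise decomposition of the integrand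
  have hptw : ∀ ω, H (W ω) * (1 - D ω) * (2 * Z ω - 1) /
        ((μ {ω' | Z ω' = Z ω}).toReal * δ)
      = ((μ {ω | Z ω = 1}).toReal * δ)⁻¹ * ({ω | Z ω = 1}.indicator h ω)
        - ((μ {ω | Z ω = 1}).toReal * δ)⁻¹
          * (({ω | D ω = 1} ∩ {ω | Z ω = 1}).indicator h ω)
        - ((μ {ω | Z ω = 0}).toReal * δ)⁻¹ * ({ω | Z ω = 0}.indicator h ω)
        + ((μ {ω | Z ω = 0}).toReal * δ)⁻¹
          * (({ω | D ω = 1} ∩ {ω | Z ω = 0}).indicator h ω) := by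
    intro ω
    rcases hZ01 ω with hz | hz <;> rcases hD01 ω with hd | hd <;>
      · norm_num [Set.indicator_apply, Set.mem_inter_iff, Set.mem_setOf_eq, hz, hd, hh_def]
        try ring
  -- integrability of the pieces
  have hB1m : MeasurableSet ({ω | D ω = 1} ∩ {ω | Z ω = 1}) :=
    (hD (measurableSet_singleton 1)).inter hA
  have hB0m : MeasurableSet ({ω | D ω = 1} ∩ {ω | Z ω = 0}) :=
    (hD (measurableSet_singleton 1)).inter hA0
  have i1 : Integrable ({ω | Z ω = 1}.indicator h) μ := hint.indicator hA
  have i2 : Integrable (({ω | D ω = 1} ∩ {ω | Z ω = 1}).indicator h) μ := hint.indicator hB1m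
  have i3 : Integrable ({ω | Z ω = 0}.indicator h) μ := hint.indicator hA0
  have i4 : Integrable (({ω | D ω = 1} ∩ {ω | Z ω = 0}).indicator h) μ := hint.indicator hB0m
  -- final computation
  set cA : ℝ := ((μ {ω | Z ω = 1}).toReal * δ)⁻¹ with hcA_def
  set cB : ℝ := ((μ {ω | Z ω = 0}).toReal * δ)⁻¹ with hcB_def
  set F1 : Ω → ℝ := {ω | Z ω = 1}.indicator h with hF1_def
  set F2' : Ω → ℝ := ({ω | D ω = 1} ∩ {ω | Z ω = 1}).indicator h with hF2_def
  set F3' : Ω → ℝ := {ω | Z ω = 0}.indicator h with hF3_def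
  set F4' : Ω → ℝ := ({ω | D ω = 1} ∩ {ω | Z ω = 0}).indicator h with hF4_def
  have step1 : ∫ ω, H (W ω) * (1 - D ω) * (2 * Z ω - 1) /
        ((μ {ω' | Z ω' = Z ω}).toReal * δ) ∂μ
      = ∫ ω, (cA * F1 ω - cA * F2' ω - cB * F3' ω + cB * F4' ω) ∂μ :=
    integral_congr_ae (Eventually.of_forall hptw)
  have step2 : ∫ ω, (cA * F1 ω - cA * F2' ω - cB * F3' ω + cB * F4' ω) ∂μ
      = cA * ∫ ω, F1 ω ∂μ - cA * ∫ ω, F2' ω ∂μ - cB * ∫ ω, F3' ω ∂μ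
        + cB * ∫ ω, F4' ω ∂μ := by
    have e4 : ∫ ω, cB * F4' ω ∂μ = cB * ∫ ω, F4' ω ∂μ := integral_const_mul _ _
    have e3 : ∫ ω, cB * F3' ω ∂μ = cB * ∫ ω, F3' ω ∂μ := integral_const_mul _ _
    have e2 : ∫ ω, cA * F2' ω ∂μ = cA * ∫ ω, F2' ω ∂μ := integral_const_mul _ _
    have e1 : ∫ ω, cA * F1 ω ∂μ = cA * ∫ ω, F1 ω ∂μ := integral_const_mul _ _
    have s12 : ∫ ω, (cA * F1 ω - cA * F2' ω) ∂μ
        = ∫ ω, cA * F1 ω ∂μ - ∫ ω, cA * F2' ω ∂μ :=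
      integral_sub (i1.const_mul cA) (i2.const_mul cA)
    have s123 : ∫ ω, (cA * F1 ω - cA * F2' ω - cB * F3' ω) ∂μ
        = ∫ ω, (cA * F1 ω - cA * F2' ω) ∂μ - ∫ ω, cB * F3' ω ∂μ :=
      integral_sub ((i1.const_mul cA).sub (i2.const_mul cA)) (i3.const_mul cB)
    have s1234 : ∫ ω, (cA * F1 ω - cA * F2' ω - cB * F3' ω + cB * F4' ω) ∂μ
        = ∫ ω, (cA * F1 ω - cA * F2' ω - cB * F3' ω) ∂μ + ∫ ω, cB * F4' ω ∂μ :=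
      integral_add (((i1.const_mul cA).sub (i2.const_mul cA)).sub (i3.const_mul cB))
        (i4.const_mul cB)
    rw [s1234, s123, s12, e1, e2, e3, e4]
  rw [step1, step2, hF1_def, hF2_def, hF3_def, hF4_def,
    integral_indicator hA, integral_indicator hB1m, integral_indicator hA0,
    integral_indicator hB0m, hIA, hIA0, hI1, hI0]
  set I : ℝ := ∫ ω, h ω ∂μ with hI_def
  set J1 : ℝ := ∫ ω, k ω * MeasureTheory.condExp m (μ[|{ω | Z ω = 1}]) D ω ∂μ with hJ1_def
  set J0 : ℝ := ∫ ω, k ω * MeasureTheory.condExp m (μ[|{ω | Z ω = 0}]) D ω ∂μ with hJ0_def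
  have hJ : J0 = J1 - δ * I := by
    have := F4
    linarith
  rw [hJ, hcA_def, hcB_def]
  field_simp
  ring


/-- Core weighting identity (S1): under Z ⟂ U, W ⟂ (D,Z) | U and the
no-interaction condition E[D|Z=1,U] − E[D|Z=0,U] = δ ≠ 0 a.s., for any bounded
measurable H one has E[H(W)·D·(2Z−1)/(f(Z)δ)] = E[H(W)]. -/
theorem weighting_identity_untreated
    {Ω : Type*} [MeasurableSpace Ω] [StandardBorelSpace Ω]
    (μ : Measure Ω) [IsProbabilityMeasure μ]
    (Z D U W : Ω → ℝ) (H : ℝ → ℝ) (δ : ℝ)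
    (hZ : Measurable Z) (hD : Measurable D) (hU : Measurable U) (hW : Measurable W)
    (hHmeas : Measurable H) (hHbdd : ∃ C, ∀ x, |H x| ≤ C)
    (hZ01 : ∀ ω, Z ω = 0 ∨ Z ω = 1)
    (hD01 : ∀ ω, D ω = 0 ∨ D ω = 1)
    (hZpos : 0 < μ {ω | Z ω = 1}) (hZlt : μ {ω | Z ω = 1} < 1)
    (hindep : IndepFun Z U μ)
    (hci : CondIndepFun (MeasurableSpace.comap U inferInstance) hU.comap_le
      W (fun ω => (D ω, Z ω)) μ)
    (hδ : δ ≠ 0)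
    (hdiff : ∀ᵐ ω ∂μ,
      MeasureTheory.condExp (MeasurableSpace.comap U inferInstance)
        (ProbabilityTheory.cond μ {ω' | Z ω' = 1}) D ω
      - MeasureTheory.condExp (MeasurableSpace.comap U inferInstance)
        (ProbabilityTheory.cond μ {ω' | Z ω' = 0}) D ω = δ) :
    ∫ ω, H (W ω) * (1 - D ω) * (2 * Z ω - 1) /
        ((μ {ω' | Z ω' = Z ω}).toReal * δ) ∂μ
      = - ∫ ω, H (W ω) ∂μ := by
  obtain ⟨C, hC⟩ := hHbdd
  exact main_aux μ hU.comap_le Z D W H δ hZ hD hW hHmeas hC hZ01 hD01 hZpos hZlt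
    ((IndepFun_iff_Indep Z U μ).mp hindep) hci hδ hdiff
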